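/- Let q be real with 0 < q < 1 and let ν₁, ν₂ be positive integers. Then ((−q^{ν₁};q)_∞ (q^{ν₂};q)_∞)/((q^{ν₁};q)_∞ (−q^{ν₂};q)_∞) = exp(−2·(∑_{j=1}^{ν₁−1} arctanh(q^{j}) − ∑_{j=1}^{ν₂−1} arctanh(q^{j}))), where an empty sum equals 0. (This is Proposition 9 of the paper; in the paper the exponent is misprinted with a factor −4 in place of −2.) -/

import Mathlib

/-- The q-Pochhammer infinite product `(a; q)_∞ = ∏_{n=0}^∞ (1 - a qⁿ)`. -/
noncomputable def qPoch (a q : ℝ) : ℝ := ∏' n : ℕ, (1 - a * q ^ n)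
/-- The inverse hyperbolic tangent. -/
noncomputable def arctanh (x : ℝ) : ℝ := Real.log ((1 + x) / (1 - x)) / 2

lemma fac_pos {a q : ℝ} (ha : |a| < 1) (hq0 : 0 ≤ q) (hq1 : q < 1) (n : ℕ) :
    0 < 1 - a * q ^ n := by
  have h1 : |a * q ^ n| < 1 := by
    rw [abs_mul, abs_pow, abs_of_nonneg hq0]
    have hp : q ^ n ≤ 1 := pow_le_one₀ hq0 hq1.le
    have := abs_nonneg a
    nlinarith
  have h2 : a * q ^ n ≤ |a * q ^ n| := le_abs_self _
  linarith

lemma log_term_summable {a q : ℝ} (ha : |a| < 1) (hq0 : 0 ≤ q) (hq1 : q < 1) :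
    Summable fun n : ℕ ↦ Real.log (1 - a * q ^ n) := by
  have hgeom : Summable fun n : ℕ ↦ a * q ^ n :=
    (summable_geometric_of_lt_one hq0 hq1).mul_left a
  have hdiff : DifferentiableAt ℝ (fun x : ℝ ↦ Real.log (1 - x)) 0 := by
    apply DifferentiableAt.comp (g := Real.log) (f := fun x : ℝ ↦ 1 - x)
    · exact Real.differentiableAt_log (by norm_num)
    · exact (differentiable_const (1 : ℝ)).differentiableAt.sub differentiableAt_id
  have hO : (fun x : ℝ ↦ Real.log (1 - x)) =O[nhds 0] id := by
    simpa [Function.id_def] using hdiff.isBigO_sub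
  exact hO.comp_summable hgeom

lemma qPoch_eq_exp {a q : ℝ} (ha : |a| < 1) (hq0 : 0 ≤ q) (hq1 : q < 1) :
    qPoch a q = Real.exp (∑' n : ℕ, Real.log (1 - a * q ^ n)) := by
  have := Real.rexp_tsum_eq_tprod (f := fun n : ℕ ↦ 1 - a * q ^ n)
    (fun n ↦ fac_pos ha hq0 hq1 n) (log_term_summable ha hq0 hq1)
  simpa [qPoch] using this.symm

lemma qPoch_pos {a q : ℝ} (ha : |a| < 1) (hq0 : 0 ≤ q) (hq1 : q < 1) :
    0 < qPoch a q := by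
  rw [qPoch_eq_exp ha hq0 hq1]; exact Real.exp_pos _

lemma qPoch_shift {a q : ℝ} (ha : |a| < 1) (hq0 : 0 < q) (hq1 : q < 1) :
    qPoch a q = (1 - a) * qPoch (a * q) q := by
  have haq : |a * q| < 1 := by
    rw [abs_mul, abs_of_nonneg hq0.le]
    have := abs_nonneg a
    nlinarith
  rw [qPoch_eq_exp ha hq0.le hq1, qPoch_eq_exp haq hq0.le hq1,
    Summable.tsum_eq_zero_add (log_term_summable ha hq0.le hq1), Real.exp_add,
    Real.exp_log (by simpa using fac_pos ha hq0.le hq1 0)]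
  have : ∀ n : ℕ, Real.log (1 - a * q ^ (n + 1)) = Real.log (1 - a * q * q ^ n) := by
    intro n; rw [pow_succ']; ring_nf
  simp only [pow_zero, mul_one, this]

lemma exp_neg_two_arctanh {x : ℝ} (hx0 : 0 ≤ x) (hx1 : x < 1) :
    Real.exp (-2 * arctanh x) = (1 - x) / (1 + x) := by
  have h1 : 0 < 1 - x := by linarith
  have h2 : 0 < 1 + x := by linarith
  rw [arctanh, show -2 * (Real.log ((1 + x) / (1 - x)) / 2) =
    -Real.log ((1 + x) / (1 - x)) by ring, Real.exp_neg,
    Real.exp_log (by positivity), inv_div]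

lemma abs_pow_lt_one {q : ℝ} (hq0 : 0 < q) (hq1 : q < 1) {ν : ℕ} (hν : 1 ≤ ν) :
    |q ^ ν| < 1 := by
  rw [abs_pow, abs_of_nonneg hq0.le]
  exact pow_lt_one₀ hq0.le hq1 (by omega)

lemma F_eq (q : ℝ) (hq0 : 0 < q) (hq1 : q < 1) : ∀ ν : ℕ, 1 ≤ ν →
    qPoch (-(q ^ ν)) q / qPoch (q ^ ν) q =
      (qPoch (-q) q / qPoch q q) *
        Real.exp (-2 * ∑ j ∈ Finset.range (ν - 1), arctanh (q ^ (j + 1))) := by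
  intro ν hν
  induction ν, hν using Nat.le_induction with
  | base => simp [pow_one]
  | succ ν hν ih =>
    have hpow : |q ^ ν| < 1 := abs_pow_lt_one hq0 hq1 hν
    have hnpow : |(-(q ^ ν))| < 1 := by rwa [abs_neg]
    have hqν0 : 0 < q ^ ν := pow_pos hq0 ν
    have hqν1 : q ^ ν < 1 := pow_lt_one₀ hq0.le hq1 (by omega)
    have hs1 : qPoch (q ^ ν) q = (1 - q ^ ν) * qPoch (q ^ (ν + 1)) q := by
      have := qPoch_shift hpow hq0 hq1
      rwa [← pow_succ] at this
    have hs2 : qPoch (-(q ^ ν)) q = (1 + q ^ ν) * qPoch (-(q ^ (ν + 1))) q := by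
      have := qPoch_shift hnpow hq0 hq1
      rw [neg_mul, ← pow_succ] at this
      rw [this]; ring
    have hp1 : 0 < qPoch (q ^ (ν + 1)) q :=
      qPoch_pos (abs_pow_lt_one hq0 hq1 (by omega)) hq0.le hq1
    have hP1 : 0 < qPoch (q ^ ν) q := qPoch_pos hpow hq0.le hq1
    have key : qPoch (-(q ^ (ν + 1))) q / qPoch (q ^ (ν + 1)) q =
        (qPoch (-(q ^ ν)) q / qPoch (q ^ ν) q) * ((1 - q ^ ν) / (1 + q ^ ν)) := by
      rw [hs1, hs2, mul_div_mul_comm, mul_right_comm]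
      have hone : (1 + q ^ ν) / (1 - q ^ ν) * ((1 - q ^ ν) / (1 + q ^ ν)) = 1 := by
        rw [div_mul_div_comm, div_eq_one_iff_eq (by nlinarith)]
        ring
      rw [hone, one_mul]
    rw [key, ih, ← exp_neg_two_arctanh hqν0.le hqν1,
      show (ν + 1) - 1 = (ν - 1) + 1 by omega, Finset.sum_range_succ,
      show (ν - 1) + 1 = ν by omega, mul_assoc, ← Real.exp_add]
    congr 2
    ring

/-- Proposition 9 (corrected): for positive integers `ν₁, ν₂`,
`((-q^{ν₁};q)_∞ (q^{ν₂};q)_∞)/((q^{ν₁};q)_∞ (-q^{ν₂};q)_∞) =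
exp(-2 (∑_{j=1}^{ν₁-1} arctanh(qʲ) - ∑_{j=1}^{ν₂-1} arctanh(qʲ)))`. -/
theorem stmt_13 (q : ℝ) (hq0 : 0 < q) (hq1 : q < 1) (ν₁ ν₂ : ℕ) (hν₁ : 1 ≤ ν₁) (hν₂ : 1 ≤ ν₂) :
    qPoch (-(q ^ ν₁)) q * qPoch (q ^ ν₂) q / (qPoch (q ^ ν₁) q * qPoch (-(q ^ ν₂)) q) =
      Real.exp (-2 * ((∑ j ∈ Finset.range (ν₁ - 1), arctanh (q ^ (j + 1))) -
        ∑ j ∈ Finset.range (ν₂ - 1), arctanh (q ^ (j + 1)))) := by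
  have h1 := F_eq q hq0 hq1 ν₁ hν₁
  have h2 := F_eq q hq0 hq1 ν₂ hν₂
  have hP1 : 0 < qPoch (q ^ ν₁) q := qPoch_pos (abs_pow_lt_one hq0 hq1 hν₁) hq0.le hq1
  have hP2 : 0 < qPoch (q ^ ν₂) q := qPoch_pos (abs_pow_lt_one hq0 hq1 hν₂) hq0.le hq1
  have hA2 : 0 < qPoch (-(q ^ ν₂)) q := by
    apply qPoch_pos _ hq0.le hq1
    rw [abs_neg]; exact abs_pow_lt_one hq0 hq1 hν₂
  have hC1 : 0 < qPoch (-q) q := by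
    apply qPoch_pos _ hq0.le hq1
    rw [abs_neg, abs_of_nonneg hq0.le]; exact hq1
  have hC2 : 0 < qPoch q q := by
    apply qPoch_pos _ hq0.le hq1
    rw [abs_of_nonneg hq0.le]; exact hq1
  have hlhs : qPoch (-(q ^ ν₁)) q * qPoch (q ^ ν₂) q /
      (qPoch (q ^ ν₁) q * qPoch (-(q ^ ν₂)) q) =
      (qPoch (-(q ^ ν₁)) q / qPoch (q ^ ν₁) q) /
        (qPoch (-(q ^ ν₂)) q / qPoch (q ^ ν₂) q) := by
    field_simp
  rw [hlhs, h1, h2, mul_div_mul_comm, div_self (ne_of_gt (div_pos hC1 hC2)), one_mul,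
    ← Real.exp_sub]
  congr 1
  ring
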